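/- Let p, p′ : Σ* → [0,1] with p(x) ≥ λ+ε on L, p(x) ≤ λ−ε off L, p′(x) ≥ λ′+ε′ on L′, p′(x) ≤ λ′−ε′ off L′, where 0 < λ−ε < λ+ε ≤ 1 and 0 < λ′−ε′ < λ′+ε′ ≤ 1. Then there exist positive integers s, t such that the function q(x) = (p(x)^s + p′(x)^t)/2 separates L ∪ L′ from its complement with a positive margin: inf over x ∈ L∪L′ of q(x) exceeds sup over x ∉ L∪L′ of q(x). -/

import Mathlib

/-- running tensor powers of two bounded-error acceptors in parallel
(with amplitude 1/√2 each) accepts the union with a positive margin: there are positive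
integers `s, t` such that `q(x) = (p(x)^s + p′(x)^t)/2` separates `L ∪ L′` from its
complement (the infimum over the union exceeds the supremum over the complement). -/
theorem union_of_bounded_error_languages {A : Type} (L L' : Set (List A))
    (p p' : List A → ℝ) (lam eps lam' eps' : ℝ)
    (hp : ∀ x, 0 ≤ p x ∧ p x ≤ 1) (hp' : ∀ x, 0 ≤ p' x ∧ p' x ≤ 1)
    (h1 : 0 < lam - eps) (h2 : lam - eps < lam + eps) (h3 : lam + eps ≤ 1)
    (h1' : 0 < lam' - eps') (h2' : lam' - eps' < lam' + eps') (h3' : lam' + eps' ≤ 1)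
    (hIn : ∀ x ∈ L, lam + eps ≤ p x) (hOut : ∀ x ∉ L, p x ≤ lam - eps)
    (hIn' : ∀ x ∈ L', lam' + eps' ≤ p' x) (hOut' : ∀ x ∉ L', p' x ≤ lam' - eps') :
    ∃ s t : ℕ, 0 < s ∧ 0 < t ∧ ∃ c d : ℝ, d < c ∧
      (∀ x ∈ L ∪ L', c ≤ (p x ^ s + p' x ^ t) / 2) ∧
      (∀ x ∉ L ∪ L', (p x ^ s + p' x ^ t) / 2 ≤ d) := by
  set a := lam - eps with ha
  set b := lam + eps with hb
  set a' := lam' - eps' with ha'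
  set b' := lam' + eps' with hb'
  -- shrunk thresholds, strictly below 1
  set B : ℝ := (a + b) / 2 with hB
  set B' : ℝ := (a' + b') / 2 with hB'
  have haB : a < B := by simp only [hB]; linarith
  have hBb : B < b := by simp only [hB]; linarith
  have hB0 : 0 < B := lt_trans h1 haB
  have hB1 : B < 1 := by simp only [hB]; nlinarith
  have haB' : a' < B' := by simp only [hB']; linarith
  have hBb' : B' < b' := by simp only [hB']; linarith
  have hB0' : 0 < B' := lt_trans h1' haB'
  have hB1' : B' < 1 := by simp only [hB']; nlinarith
  -- ratios
  set r : ℝ := a / B with hr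
  set r' : ℝ := a' / B' with hr'
  have hr0 : 0 ≤ r := le_of_lt (div_pos h1 hB0)
  have hr1 : r < 1 := (div_lt_one hB0).mpr haB
  have hr0' : 0 ≤ r' := le_of_lt (div_pos h1' hB0')
  have hr1' : r' < 1 := (div_lt_one hB0').mpr haB'
  have haeq : a = r * B := by rw [hr, div_mul_cancel₀ _ hB0.ne']
  have haeq' : a' = r' * B' := by rw [hr', div_mul_cancel₀ _ hB0'.ne']
  -- step 1: choose T with r'^T < B'/2
  obtain ⟨T, hT⟩ := exists_pow_lt_of_lt_one (by linarith : (0:ℝ) < B' / 2) hr1'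
  -- step 2: choose n with r^n < B'/2, B^n < B'^T, n ≥ 1
  obtain ⟨n₁, hn₁⟩ := exists_pow_lt_of_lt_one (by linarith : (0:ℝ) < B' / 2) hr1
  obtain ⟨n₂, hn₂⟩ := exists_pow_lt_of_lt_one (pow_pos hB0' T) hB1
  set n := max 1 (max n₁ n₂) with hn
  have hn1 : 1 ≤ n := le_max_left _ _
  have hrn : r ^ n < B' / 2 :=
    lt_of_le_of_lt (pow_le_pow_of_le_one hr0 (le_of_lt hr1)
      (le_trans (le_max_left n₁ n₂) (le_max_right _ _))) hn₁
  have hBn : B ^ n < B' ^ T :=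
    lt_of_le_of_lt (pow_le_pow_of_le_one (le_of_lt hB0) (le_of_lt hB1)
      (le_trans (le_max_right n₁ n₂) (le_max_right _ _))) hn₂
  have hBn0 : 0 < B ^ n := pow_pos hB0 n
  -- step 3: t = least with B'^t ≤ B^n
  have hex : ∃ t, B' ^ t ≤ B ^ n := by
    obtain ⟨t, ht⟩ := exists_pow_lt_of_lt_one hBn0 hB1'
    exact ⟨t, le_of_lt ht⟩
  set t := Nat.find hex with htdef
  have htspec : B' ^ t ≤ B ^ n := Nat.find_spec hex
  have ht1 : 1 ≤ t := by
    rcases Nat.eq_zero_or_pos t with h | h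
    · exfalso
      have : B ^ n < 1 := pow_lt_one₀ (le_of_lt hB0) hB1 (by omega)
      rw [h] at htspec; simp at htspec; linarith
    · exact h
  -- t > T, since B'^t ≤ B^n < B'^T and B'^• is antitone
  have htT : T ≤ t := by
    by_contra h
    push_neg at h
    have : B' ^ T ≤ B' ^ t :=
      pow_le_pow_of_le_one (le_of_lt hB0') (le_of_lt hB1') (le_of_lt h)
    linarith
  -- lower bound on B'^t from minimality
  have hlow : B' * B ^ n < B' ^ t := by
    have hmin : ¬ B' ^ (t - 1) ≤ B ^ n := Nat.find_min hex (by omega)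
    push_neg at hmin
    have : B' ^ t = B' * B' ^ (t - 1) := by
      rw [← pow_succ']
      congr 1
      omega
    rw [this]
    exact (mul_lt_mul_iff_right₀ hB0').mpr hmin
  -- the key inequality: a^n + a'^t < B' * B^n
  have hkey : a ^ n + a' ^ t < B' * B ^ n := by
    have h1n : a ^ n < B' / 2 * B ^ n := by
      rw [haeq, mul_pow]
      exact (mul_lt_mul_of_pos_right hrn hBn0)
    have h2t : a' ^ t < B' / 2 * B ^ n := by
      rw [haeq', mul_pow]
      have hr't : r' ^ t ≤ r' ^ T :=
        pow_le_pow_of_le_one hr0' (le_of_lt hr1') htT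
      have hb't : (0:ℝ) ≤ B' ^ t := le_of_lt (pow_pos hB0' t)
      calc r' ^ t * B' ^ t ≤ r' ^ T * B' ^ t := by
            exact mul_le_mul_of_nonneg_right hr't hb't
        _ ≤ r' ^ T * B ^ n := by
            exact mul_le_mul_of_nonneg_left htspec (pow_nonneg hr0' T)
        _ < B' / 2 * B ^ n := mul_lt_mul_of_pos_right hT hBn0
    linarith
  -- finish
  refine ⟨n, t, by omega, by omega, min (B ^ n) (B' ^ t) / 2, (a ^ n + a' ^ t) / 2, ?_, ?_, ?_⟩
  · have : a ^ n + a' ^ t < min (B ^ n) (B' ^ t) := by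
      apply lt_min
      · calc a ^ n + a' ^ t < B' * B ^ n := hkey
          _ ≤ 1 * B ^ n := mul_le_mul_of_nonneg_right (le_of_lt hB1') (le_of_lt hBn0)
          _ = B ^ n := one_mul _
      · exact lt_trans hkey hlow
    linarith
  · intro x hx
    have hpx0 := (hp x).1
    have hpx0' := (hp' x).1
    rcases hx with hx | hx
    · have hbx : B ≤ p x := le_trans (le_of_lt hBb) (hIn x hx)
      have : B ^ n ≤ p x ^ n := pow_le_pow_left₀ (le_of_lt hB0) hbx n
      have h2 : (0:ℝ) ≤ p' x ^ t := pow_nonneg hpx0' t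
      have h3 : min (B ^ n) (B' ^ t) ≤ B ^ n := min_le_left _ _
      linarith
    · have hbx : B' ≤ p' x := le_trans (le_of_lt hBb') (hIn' x hx)
      have : B' ^ t ≤ p' x ^ t := pow_le_pow_left₀ (le_of_lt hB0') hbx t
      have h2 : (0:ℝ) ≤ p x ^ n := pow_nonneg hpx0 n
      have h3 : min (B ^ n) (B' ^ t) ≤ B' ^ t := min_le_right _ _
      linarith
  · intro x hx
    rw [Set.mem_union] at hx
    push_neg at hx
    have h1x : p x ^ n ≤ a ^ n := pow_le_pow_left₀ (hp x).1 (hOut x hx.1) n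
    have h2x : p' x ^ t ≤ a' ^ t := pow_le_pow_left₀ (hp' x).1 (hOut' x hx.2) t
    linarith
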